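/- Let (u, I, x̄) solve the system R(x̄(t), I(t)) = 0 on [0,T], with x̄ differentiable and R C¹ satisfying ∂_I R ≤ -K̄₂ < 0 and ∇_x R(x̄(t), I(t)) = -D²u(t,x̄(t)) ẋ̄(t) where D²u(t,x̄(t)) ≤ -2L̄₁·Id. If moreover ẋ̄(t) = (-D²u(t,x̄(t)))⁻¹ ∇_x R(x̄(t), I(t)), then I is nondecreasing on [0,T]. -/

import Mathlib

open Set

/-- Lemma 4.1: along a solution of the system, with
`ẋ̄(t) = (-D²u(t,x̄(t)))⁻¹ ∇_x R(x̄(t),I(t))` (written implicitly as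
`D²u(t,x̄(t)) ẋ̄(t) = -∇_x R(x̄(t),I(t))`), `D²u ≤ -2L̄₁ Id`, `∂_I R ≤ -K̄₂ < 0`
and `R(x̄(t),I(t)) = 0`, the function `I` is nondecreasing. -/
theorem stmt5 (d : ℕ) (T : ℝ) (hT : 0 < T)
    (R : EuclideanSpace ℝ (Fin d) → ℝ → ℝ)
    (hRC1 : ContDiff ℝ 1 fun p : EuclideanSpace ℝ (Fin d) × ℝ => R p.1 p.2)
    (K₂ : ℝ) (hK₂ : 0 < K₂)
    (hRI : ∀ x J, deriv (R x) J ≤ -K₂)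
    (L₁ : ℝ) (hL₁ : 0 < L₁)
    (u : ℝ → EuclideanSpace ℝ (Fin d) → ℝ) (hu : ∀ t, ContDiff ℝ 2 (u t))
    (xbar : ℝ → EuclideanSpace ℝ (Fin d)) (xbar' : ℝ → EuclideanSpace ℝ (Fin d))
    (I : ℝ → ℝ) (I' : ℝ → ℝ)
    (hHess : ∀ t ∈ Icc (0 : ℝ) T, ∀ v : EuclideanSpace ℝ (Fin d),
      inner (𝕜 := ℝ) (fderiv ℝ (gradient (u t)) (xbar t) v) v ≤ -2 * L₁ * ‖v‖ ^ 2)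
    (hxbar : ∀ t ∈ Icc (0 : ℝ) T, HasDerivAt xbar (xbar' t) t)
    (hODE : ∀ t ∈ Icc (0 : ℝ) T,
      (fderiv ℝ (gradient (u t)) (xbar t)) (xbar' t)
        = - gradient (fun x => R x (I t)) (xbar t))
    (hIdiff : ∀ t ∈ Icc (0 : ℝ) T, HasDerivAt I (I' t) t)
    (hzero : ∀ t ∈ Icc (0 : ℝ) T, R (xbar t) (I t) = 0) :
    MonotoneOn I (Icc (0 : ℝ) T) := by
  have key : ∀ t ∈ Icc (0 : ℝ) T, 0 ≤ I' t := by
    intro t ht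
    set F := fderiv ℝ (fun p : EuclideanSpace ℝ (Fin d) × ℝ => R p.1 p.2) (xbar t, I t) with hFdef
    have hF : HasFDerivAt (fun p : EuclideanSpace ℝ (Fin d) × ℝ => R p.1 p.2) F (xbar t, I t) :=
      ((hRC1.differentiable one_ne_zero) (xbar t, I t)).hasFDerivAt
    -- derivative of the composite t ↦ R (xbar t) (I t)
    have hp : HasDerivAt (fun s => (xbar s, I s)) (xbar' t, I' t) t :=
      (hxbar t ht).prodMk (hIdiff t ht)
    have h1 : HasDerivAt (fun s => R (xbar s) (I s)) (F (xbar' t, I' t)) t :=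
      by have := hF.comp_hasDerivAt t hp; exact this
    have h2 : F (xbar' t, I' t) = 0 := by
      have hzero' : HasDerivWithinAt (fun _ : ℝ => (0 : ℝ)) (F (xbar' t, I' t)) (Icc 0 T) t :=
        (h1.hasDerivWithinAt).congr (fun y hy => (hzero y hy).symm) (hzero t ht).symm
      have hconst : HasDerivWithinAt (fun _ : ℝ => (0 : ℝ)) 0 (Icc 0 T) t :=
        (hasDerivWithinAt_const t _ 0)
      have hud : UniqueDiffWithinAt ℝ (Icc (0 : ℝ) T) t := (uniqueDiffOn_Icc hT) t ht
      rw [← hzero'.derivWithin hud, hconst.derivWithin hud]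
    -- partial derivative in x : the gradient
    have hgx : HasFDerivAt (fun x : EuclideanSpace ℝ (Fin d) => R x (I t))
        (F.comp (ContinuousLinearMap.inl ℝ (EuclideanSpace ℝ (Fin d)) ℝ)) (xbar t) :=
      by have := hF.comp (xbar t) (hasFDerivAt_prodMk_left (𝕜 := ℝ) (xbar t) (I t)); exact this
    have hgrad : ∀ v : EuclideanSpace ℝ (Fin d), inner (𝕜 := ℝ) (gradient (fun x : EuclideanSpace ℝ (Fin d) => R x (I t)) (xbar t)) v
        = F (v, 0) := by
      intro v
      rw [gradient, InnerProductSpace.toDual_symm_apply, hgx.fderiv]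
      simp
    -- partial derivative in I
    have hgI : HasDerivAt (R (xbar t)) (F (0, 1)) (I t) :=
      hF.comp_hasDerivAt (I t) ((hasDerivAt_const (I t) (xbar t)).prodMk (hasDerivAt_id (I t)))
    have hFsplit : F (xbar' t, I' t) = F (xbar' t, 0) + I' t * F (0, 1) := by
      have : (xbar' t, I' t) = (xbar' t, (0:ℝ)) + I' t • ((0:EuclideanSpace ℝ (Fin d)), (1:ℝ)) := by
        simp [Prod.ext_iff]
      rw [this, map_add, map_smul]
      simp [smul_eq_mul]
    -- the x-part is nonnegative
    have ha : 0 ≤ F (xbar' t, 0) := by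
      rw [← hgrad (xbar' t)]
      have := hODE t ht
      have h3 : inner (𝕜 := ℝ) (gradient (fun x : EuclideanSpace ℝ (Fin d) => R x (I t)) (xbar t)) (xbar' t)
          = - inner (𝕜 := ℝ) ((fderiv ℝ (gradient (u t)) (xbar t)) (xbar' t)) (xbar' t) := by
        rw [this]; simp [inner_neg_left]
      rw [h3]
      have h4 := hHess t ht (xbar' t)
      nlinarith [sq_nonneg ‖xbar' t‖]
    -- the I-part coefficient is negative
    have hc : F ((0:EuclideanSpace ℝ (Fin d)), (1:ℝ)) ≤ -K₂ := by
      have := hRI (xbar t) (I t)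
      rwa [hgI.deriv] at this
    -- conclude
    have heq : F (xbar' t, 0) + I' t * F (0, 1) = 0 := by rw [← hFsplit, h2]
    nlinarith
  have hdiff : ∀ t ∈ interior (Icc (0 : ℝ) T), HasDerivAt I (I' t) t := fun t ht =>
    hIdiff t (interior_subset ht)
  apply monotoneOn_of_deriv_nonneg (convex_Icc 0 T)
  · exact fun t ht => (hIdiff t ht).continuousAt.continuousWithinAt
  · exact fun t ht => ((hdiff t ht).differentiableAt).differentiableWithinAt
  · intro t ht
    rw [(hdiff t ht).deriv]
    exact key t (interior_subset ht)
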